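/- (Proposition 2) Let d ≥ 1 and let {V_n}_{n=0}^{d-1} and {W_m}_{m=0}^{d-1} be two families of unitary operators on ℂ^d, each family pairwise Hilbert–Schmidt orthogonal with Tr(V_n* V_k) = d·δ_{nk} and Tr(W_m* W_k) = d·δ_{mk}, such that each W_m lies in the ℂ-linear span of {V_0, …, V_{d-1}} (i.e., both families are orthogonal unitary bases of a common d-dimensional subspace of operators). Suppose that for every pair (m, n) there exists an orthonormal basis {χ_i}_{i=0}^{d-1} of ℂ^d (depending on m, n) with |⟨χ_i, W_m V_n* χ_j⟩| = 1/√d for all indices i, j. Then the two bases are mutually unbiased: |Tr(W_m V_n*)| = √d for all m, n. -/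

import Mathlib

open scoped ComplexInnerProductSpace Matrix

noncomputable section

/-- Action of a `d × d` complex matrix on a vector of `ℂ^d`. -/
def act {d : ℕ} (U : Matrix (Fin d) (Fin d) ℂ) (ψ : EuclideanSpace ℂ (Fin d)) :
    EuclideanSpace ℂ (Fin d) :=
  Matrix.toEuclideanLin U ψ

lemma trace_eq_sum_inner {d : ℕ} (M : Matrix (Fin d) (Fin d) ℂ)
    (χ : OrthonormalBasis (Fin d) ℂ (EuclideanSpace ℂ (Fin d))) :
    Matrix.trace M = ∑ i, ⟪χ i, act M (χ i)⟫ := by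
  set P : Matrix (Fin d) (Fin d) ℂ := Matrix.of (fun k j => χ j k) with hPdef
  have horth := χ.orthonormal
  rw [orthonormal_iff_ite] at horth
  have hP : Pᴴ * P = 1 := by
    ext i j
    have := horth i j
    simp only [PiLp.inner_apply, RCLike.inner_apply] at this
    simpa [Matrix.mul_apply, Matrix.conjTranspose_apply, Matrix.one_apply, hPdef, mul_comm] using this
  have hPP : P * Pᴴ = 1 := mul_eq_one_comm.mp hP
  have key : Matrix.trace M = Matrix.trace (Pᴴ * M * P) := by
    rw [Matrix.trace_mul_cycle, hPP, Matrix.one_mul]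
  rw [key, Matrix.trace]
  apply Finset.sum_congr rfl
  intro i _
  simp only [Matrix.diag_apply, Matrix.mul_apply, Matrix.conjTranspose_apply,
    PiLp.inner_apply, RCLike.inner_apply]
  have hact : ∀ k, act M (χ i) k = ∑ l, M k l * χ i l := by
    intro k
    rfl
  simp only [Finset.sum_mul]
  rw [Finset.sum_comm]
  apply Finset.sum_congr rfl
  intro k _
  rw [hact k, Finset.sum_mul]
  apply Finset.sum_congr rfl
  intro l _
  simp [hPdef]
  ring

theorem stmt_8 {d : ℕ} (hd : 1 ≤ d)
    (V W : Fin d → Matrix (Fin d) (Fin d) ℂ)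
    (hVu : ∀ n, V n ∈ Matrix.unitaryGroup (Fin d) ℂ)
    (hWu : ∀ m, W m ∈ Matrix.unitaryGroup (Fin d) ℂ)
    (hVorth : ∀ n k, Matrix.trace ((V n)ᴴ * V k) = if n = k then (d : ℂ) else 0)
    (hWorth : ∀ m k, Matrix.trace ((W m)ᴴ * W k) = if m = k then (d : ℂ) else 0)
    (hspan : ∀ m, W m ∈ Submodule.span ℂ (Set.range V))
    (hsat : ∀ m n : Fin d, ∃ χ : OrthonormalBasis (Fin d) ℂ (EuclideanSpace ℂ (Fin d)),
      ∀ i j : Fin d, ‖⟪χ i, act (W m * (V n)ᴴ) (χ j)⟫‖ = 1 / Real.sqrt d) :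
    ∀ m n : Fin d, ‖Matrix.trace (W m * (V n)ᴴ)‖ = Real.sqrt d := by
  have hdpos : (0:ℝ) < d := by exact_mod_cast hd
  have hsd : (0:ℝ) < Real.sqrt d := Real.sqrt_pos.mpr hdpos
  -- step 1: upper bound
  have hub : ∀ m n : Fin d, ‖Matrix.trace (W m * (V n)ᴴ)‖ ≤ Real.sqrt d := by
    intro m n
    obtain ⟨χ, hχ⟩ := hsat m n
    rw [trace_eq_sum_inner _ χ]
    calc ‖∑ i, ⟪χ i, act (W m * (V n)ᴴ) (χ i)⟫‖
        ≤ ∑ i : Fin d, ‖⟪χ i, act (W m * (V n)ᴴ) (χ i)⟫‖ := norm_sum_le _ _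
      _ = ∑ i : Fin d, 1 / Real.sqrt d := by
          exact Finset.sum_congr rfl fun i _ => hχ i i
      _ = Real.sqrt d := by
          rw [Finset.sum_const, Finset.card_univ, Fintype.card_fin, nsmul_eq_mul]
          rw [mul_one_div, eq_comm, eq_div_iff hsd.ne', Real.mul_self_sqrt hdpos.le]
  intro m n
  -- step 2: coefficients
  obtain ⟨c, hWm⟩ := (Submodule.mem_span_range_iff_exists_fun ℂ).mp (hspan m)
  have hdC : (d:ℂ) ≠ 0 := by exact_mod_cast hdpos.ne'
  have htr : ∀ k, Matrix.trace (W m * (V k)ᴴ) = (d:ℂ) * c k := by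
    intro k
    rw [Matrix.trace_mul_comm, ← hWm, Matrix.mul_sum]
    simp only [Matrix.mul_smul, Matrix.trace_sum, Matrix.trace_smul, hVorth, smul_eq_mul]
    simp [Finset.sum_ite_eq, mul_comm]
  have hnorm : ∑ k : Fin d, ‖c k‖^2 = 1 := by
    have h1 : Matrix.trace ((W m)ᴴ * W m) = (d:ℂ) := by simp [hWorth m m]
    rw [← hWm] at h1
    have h2 : (∑ k, c k • V k)ᴴ = ∑ k, (starRingEnd ℂ) (c k) • (V k)ᴴ := by
      simp [Matrix.conjTranspose_sum, Matrix.conjTranspose_smul]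
    rw [h2, Finset.sum_mul] at h1
    simp only [Finset.mul_sum, Matrix.smul_mul, Matrix.mul_smul, Matrix.trace_sum,
      Matrix.trace_smul, hVorth, smul_eq_mul, smul_smul] at h1
    simp only [mul_ite, mul_zero, Finset.sum_ite_eq, Finset.mem_univ, if_true] at h1
    have h4 : ∑ k : Fin d, (c k * (starRingEnd ℂ) (c k)) = 1 := by
      rw [← Finset.sum_mul] at h1
      field_simp at h1
      exact h1
    have h5 : ((∑ k : Fin d, ‖c k‖^2 : ℝ) : ℂ) = 1 := by
      rw [← h4]
      push_cast
      apply Finset.sum_congr rfl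
      intro k _
      rw [RCLike.mul_conj]
      norm_cast
    exact_mod_cast h5
  -- step 3: each coefficient has modulus 1/sqrt d
  have hub' : ∀ k : Fin d, ‖c k‖^2 ≤ 1/(d:ℝ) := by
    intro k
    have := hub m k
    rw [htr k] at this
    rw [norm_mul, Complex.norm_natCast] at this
    have h6 : ‖c k‖ ≤ Real.sqrt d / d := by
      rw [le_div_iff₀ hdpos, mul_comm]
      exact this
    have h7 : ‖c k‖^2 ≤ (Real.sqrt d / d)^2 :=
      pow_le_pow_left₀ (norm_nonneg _) h6 2
    calc ‖c k‖^2 ≤ (Real.sqrt d / d)^2 := h7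
      _ = 1/(d:ℝ) := by
          rw [div_pow, Real.sq_sqrt hdpos.le]
          field_simp
  have heq : ∀ k : Fin d, ‖c k‖^2 = 1/(d:ℝ) := by
    intro k
    by_contra hne
    have hlt : ‖c k‖^2 < 1/(d:ℝ) := lt_of_le_of_ne (hub' k) hne
    have hsum : ∑ j : Fin d, ‖c j‖^2 < ∑ j : Fin d, 1/(d:ℝ) := by
      apply Finset.sum_lt_sum (fun j _ => hub' j) ⟨k, Finset.mem_univ k, hlt⟩
    rw [hnorm, Finset.sum_const, Finset.card_univ, Fintype.card_fin, nsmul_eq_mul] at hsum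
    rw [mul_one_div, div_self hdpos.ne'] at hsum
    exact lt_irrefl 1 hsum
  have hck : ‖c n‖ = Real.sqrt (1/(d:ℝ)) := by
    rw [← heq n, Real.sqrt_sq (norm_nonneg _)]
  rw [htr n, norm_mul, Complex.norm_natCast, hck]
  have h8 : Real.sqrt (1/(d:ℝ)) = 1 / Real.sqrt d := by
    rw [one_div, Real.sqrt_inv, one_div]
  rw [h8, mul_one_div, div_eq_iff hsd.ne']
  exact (Real.mul_self_sqrt hdpos.le).symm

end
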